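/- Let f, g : A → X be maps between extended metric spaces. Define the doubled gluing D with underlying set X × {0,1}, with internal edges within each copy of X of weight equal to finite distances, glued edges of weight 1 between (x,0) and (x,1) for each x ∈ X, and glued edges of weight 1 between (f a, 0) and (g a, 1) for each a ∈ A; equip D with the weighted path metric. Then the projection r : D → Coeq(f,g), (x,i) ↦ x, is 1-Lipschitz, the section s : Coeq(f,g) → D, x ↦ (x,0), is 2-Lipschitz, and r ∘ s = id while s ∘ r is 1-close to the identity. In particular r is a quasi-isometry. -/

import Mathlib

open scoped ENNReal NNReal
open Filter

namespace CoarseStmt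

variable {α β : Type*}

/-- Two maps into a space with extended distance `dB` are close if pointwise
distances of images are uniformly bounded by some finite constant. -/
def Close (dB : β → β → ℝ≥0∞) (f g : α → β) : Prop :=
  ∃ κ : ℝ≥0, ∀ x, dB (f x) (g x) ≤ κ

/-- `ρ` is an upper control for `f`: increasing, proper, and
`dB (f x) (f x') ≤ ρ (dA x x')` whenever `dA x x'` is finite. -/
def IsUpperControl (dA : α → α → ℝ≥0∞) (dB : β → β → ℝ≥0∞) (f : α → β)
    (ρ : ℝ≥0 → ℝ≥0) : Prop :=
  Monotone ρ ∧ Tendsto ρ atTop atTop ∧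
    ∀ x x', dA x x' ≠ ⊤ → dB (f x) (f x') ≤ ρ (dA x x').toNNReal

/-- A map is controlled if it admits an upper control. -/
def Controlled (dA : α → α → ℝ≥0∞) (dB : β → β → ℝ≥0∞) (f : α → β) : Prop :=
  ∃ ρ, IsUpperControl dA dB f ρ

/-- `θ` is a lower control for `f`: increasing, proper,
`θ (dA x x') ≤ dB (f x) (f x')`, with the convention that infinite distances
in the domain map to infinite distances in the codomain. -/
def IsLowerControl (dA : α → α → ℝ≥0∞) (dB : β → β → ℝ≥0∞) (f : α → β)
    (θ : ℝ≥0 → ℝ≥0) : Prop :=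
  Monotone θ ∧ Tendsto θ atTop atTop ∧
    (∀ x x', dA x x' = ⊤ → dB (f x) (f x') = ⊤) ∧
    (∀ x x', dA x x' ≠ ⊤ → (θ (dA x x').toNNReal : ℝ≥0∞) ≤ dB (f x) (f x'))

def HasLowerControl (dA : α → α → ℝ≥0∞) (dB : β → β → ℝ≥0∞) (f : α → β) : Prop :=
  ∃ θ, IsLowerControl dA dB f θ

/-- Some `r`-neighbourhood of the image is everything. -/
def CoarselySurjective (dB : β → β → ℝ≥0∞) (f : α → β) : Prop :=
  ∃ r : ℝ≥0, ∀ y, ∃ x, dB (f x) y ≤ r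

/-- `f` admits an affine upper control. -/
def CoarselyLipschitz (dA : α → α → ℝ≥0∞) (dB : β → β → ℝ≥0∞) (f : α → β) : Prop :=
  ∃ a b : ℝ≥0, ∀ x x', dB (f x) (f x') ≤ (a : ℝ≥0∞) * dA x x' + b

/-- A coarse equivalence: controlled, coarsely surjective, with a lower control. -/
def CoarseEquivalence (dA : α → α → ℝ≥0∞) (dB : β → β → ℝ≥0∞) (f : α → β) : Prop :=
  Controlled dA dB f ∧ CoarselySurjective dB f ∧ HasLowerControl dA dB f

/-- A quasi-isometry: affine upper and lower controls, coarsely surjective. -/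
def QuasiIsometry (dA : α → α → ℝ≥0∞) (dB : β → β → ℝ≥0∞) (f : α → β) : Prop :=
  CoarselyLipschitz dA dB f ∧
    (∃ a b : ℝ≥0, ∀ x x', dA x x' ≤ (a : ℝ≥0∞) * dB (f x) (f x') + b) ∧
    CoarselySurjective dB f

/-- Weighted path (pseudo)metric associated to an edge-weight function `E`
(`E u v = ⊤` means no edge): the infimum of total weights over finite chains. -/
noncomputable def pathDist {V : Type*} (E : V → V → ℝ≥0∞) (u v : V) : ℝ≥0∞ :=
  ⨅ (n : ℕ) (p : ℕ → V) (_ : p 0 = u) (_ : p n = v),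
    ∑ i ∈ Finset.range n, E (p i) (p (i + 1))

end CoarseStmt

namespace CoarseStmt

open Classical in
/-- Edge weights of `Coeq(f,g)`. -/
noncomputable def coeqWeight {A X : Type*} [EMetricSpace X]
    (f g : A → X) (x x' : X) : ℝ≥0∞ :=
  edist x x' ⊓
    (if ∃ a, (f a = x ∧ g a = x') ∨ (f a = x' ∧ g a = x) then 1 else ⊤)

open Classical in
/-- Edge weights of the doubled gluing `D` on `X × Bool`: internal edges
within each copy of `X`, glued edges of weight `1` between `(x,0)` and `(x,1)`,
and glued edges of weight `1` between `(f a, 0)` and `(g a, 1)`. -/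
noncomputable def dblWeight {A X : Type*} [EMetricSpace X]
    (f g : A → X) (p q : X × Bool) : ℝ≥0∞ :=
  if p.2 = q.2 then edist p.1 q.1
  else if p.1 = q.1 ∨ (p.2 = false ∧ ∃ a, f a = p.1 ∧ g a = q.1) ∨
      (q.2 = false ∧ ∃ a, f a = q.1 ∧ g a = p.1) then 1 else ⊤

section Lemmas
variable {V : Type*} (E : V → V → ℝ≥0∞)

lemma pathDist_le_sum' (n : ℕ) (p : ℕ → V) {u v : V} (h0 : p 0 = u) (hn : p n = v) :
    pathDist E u v ≤ ∑ i ∈ Finset.range n, E (p i) (p (i + 1)) :=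
  (iInf_le _ n).trans ((iInf_le _ p).trans ((iInf_le _ h0).trans (iInf_le _ hn)))

lemma pathDist_self (u : V) : pathDist E u u = 0 :=
  le_antisymm ((pathDist_le_sum' E 0 (fun _ => u) rfl rfl).trans (by simp)) zero_le

lemma pathDist_le_weight (u v : V) : pathDist E u v ≤ E u v := by
  have h := pathDist_le_sum' E 1 (fun i => if i = 0 then u else v)
    (u := u) (v := v) (by simp) (by simp)
  simpa using h

lemma pathDist_triangle (u w v : V) :
    pathDist E u v ≤ pathDist E u w + pathDist E w v := by
  conv_rhs => rw [pathDist, pathDist]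
  simp only [ENNReal.iInf_add, ENNReal.add_iInf]
  refine le_iInf fun n => le_iInf fun p => le_iInf fun hp0 => le_iInf fun hpn =>
    le_iInf fun m => le_iInf fun q => le_iInf fun hq0 => le_iInf fun hqm => ?_
  -- here p : chain from w to v of length n, q : chain from u to w of length m
  set r : ℕ → V := fun i => if i < m then q i else p (i - m) with hr
  have hr0 : r 0 = u := by
    by_cases h : 0 < m
    · simp [hr, h, hq0]
    · have hm0 : m = 0 := by omega
      simp only [hr, hm0] at *
      simp [hp0, ← hq0, ← hqm]
  have hrnm : r (m + n) = v := by
    have h : ¬ m + n < m := by omega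
    simp [hr, h, hpn]
  refine (pathDist_le_sum' E (m + n) r hr0 hrnm).trans ?_
  rw [Finset.sum_range_add]
  refine add_le_add (Finset.sum_le_sum fun i hi => le_of_eq ?_)
    (Finset.sum_le_sum fun i hi => le_of_eq ?_)
  · rw [Finset.mem_range] at hi
    have h1 : r i = q i := by simp [hr, hi]
    have h2 : r (i + 1) = q (i + 1) := by
      by_cases h : i + 1 < m
      · simp [hr, h]
      · have him : i + 1 = m := by omega
        subst him
        simp [hr, hp0, hqm]
    rw [h1, h2]
  · have h1 : r (m + i) = p i := by
      have h : ¬ m + i < m := by omega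
      simp [hr, h]
    have h2 : r (m + i + 1) = p (i + 1) := by
      have h : ¬ m + i + 1 < m := by omega
      have h3 : m + i + 1 - m = i + 1 := by omega
      simp [hr, h, h3]
    rw [h1, h2]

lemma pathDist_le_sum_pathDist (n : ℕ) (p : ℕ → V) :
    pathDist E (p 0) (p n) ≤ ∑ i ∈ Finset.range n, pathDist E (p i) (p (i + 1)) := by
  induction n with
  | zero => simp [pathDist_self]
  | succ n ih =>
    rw [Finset.sum_range_succ]
    exact (pathDist_triangle E _ (p n) _).trans (add_le_add ih le_rfl)

end Lemmas

section Glue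
variable {A X : Type*} [EMetricSpace X] (f g : A → X)

lemma edge_proj (p q : X × Bool) : coeqWeight f g p.1 q.1 ≤ dblWeight f g p q := by
  classical
  rw [dblWeight]
  split_ifs with h1 h2
  · exact inf_le_left.trans le_rfl
  · rcases h2 with h | ⟨_, a, hfa, hga⟩ | ⟨_, a, hfa, hga⟩
    · rw [h]; exact inf_le_left.trans (by simp)
    · refine inf_le_right.trans (le_of_eq ?_)
      rw [if_pos ⟨a, Or.inl ⟨hfa, hga⟩⟩]
    · refine inf_le_right.trans (le_of_eq ?_)
      rw [if_pos ⟨a, Or.inr ⟨hfa, hga⟩⟩]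
  · exact le_top

lemma proj_lipschitz (u v : X × Bool) :
    pathDist (coeqWeight f g) u.1 v.1 ≤ pathDist (dblWeight f g) u v := by
  conv_rhs => rw [pathDist]
  refine le_iInf fun n => le_iInf fun p => le_iInf fun h0 => le_iInf fun hn => ?_
  refine (pathDist_le_sum' _ n (fun i => (p i).1)
    (by simp [h0]) (by simp [hn])).trans ?_
  exact Finset.sum_le_sum fun i _ => edge_proj f g _ _

lemma edge_section (u v : X) :
    pathDist (dblWeight f g) (u, false) (v, false) ≤ 2 * coeqWeight f g u v := by
  classical
  rw [coeqWeight]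
  rcases le_total (edist u v)
      (if ∃ a, (f a = u ∧ g a = v) ∨ (f a = v ∧ g a = u) then 1 else ⊤) with h | h
  · rw [inf_eq_left.2 h]
    refine (pathDist_le_weight _ _ _).trans ?_
    have : dblWeight f g (u, false) (v, false) = edist u v := by rw [dblWeight]; simp
    rw [this]
    exact le_mul_of_one_le_left zero_le one_le_two
  · rw [inf_eq_right.2 h]
    split_ifs with hc
    · obtain ⟨a, ⟨hfa, hga⟩ | ⟨hfa, hga⟩⟩ := hc
      · refine (pathDist_triangle _ _ (v, true) _).trans ?_
        have e1 : dblWeight f g (u, false) (v, true) ≤ 1 := by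
          rw [dblWeight, if_neg (by simp), if_pos (Or.inr (Or.inl ⟨rfl, a, hfa, hga⟩))]
        have e2 : dblWeight f g (v, true) (v, false) ≤ 1 := by
          rw [dblWeight, if_neg (by simp), if_pos (Or.inl rfl)]
        calc pathDist (dblWeight f g) (u, false) (v, true) +
              pathDist (dblWeight f g) (v, true) (v, false)
            ≤ 1 + 1 := add_le_add ((pathDist_le_weight _ _ _).trans e1)
              ((pathDist_le_weight _ _ _).trans e2)
          _ = 2 * 1 := by ring
      · refine (pathDist_triangle _ _ (u, true) _).trans ?_
        have e1 : dblWeight f g (u, false) (u, true) ≤ 1 := by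
          rw [dblWeight, if_neg (by simp), if_pos (Or.inl rfl)]
        have e2 : dblWeight f g (u, true) (v, false) ≤ 1 := by
          rw [dblWeight, if_neg (by simp), if_pos (Or.inr (Or.inr ⟨rfl, a, hfa, hga⟩))]
        calc pathDist (dblWeight f g) (u, false) (u, true) +
              pathDist (dblWeight f g) (u, true) (v, false)
            ≤ 1 + 1 := add_le_add ((pathDist_le_weight _ _ _).trans e1)
              ((pathDist_le_weight _ _ _).trans e2)
          _ = 2 * 1 := by ring
    · simp

set_option maxHeartbeats 1000000 in
lemma section_lipschitz (x x' : X) :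
    pathDist (dblWeight f g) (x, false) (x', false) ≤
      2 * pathDist (coeqWeight f g) x x' := by
  have key : ∀ (n : ℕ) (q : ℕ → X), q 0 = x → q n = x' →
      pathDist (dblWeight f g) (x, false) (x', false) ≤
        2 * ∑ i ∈ Finset.range n, coeqWeight f g (q i) (q (i + 1)) := by
    intro n q h0 hn
    calc pathDist (dblWeight f g) (x, false) (x', false)
        = pathDist (dblWeight f g) ((fun i => ((q i, false) : X × Bool)) 0)
          ((fun i => ((q i, false) : X × Bool)) n) := by simp [h0, hn]
      _ ≤ ∑ i ∈ Finset.range n,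
          pathDist (dblWeight f g) (q i, false) (q (i + 1), false) :=
          pathDist_le_sum_pathDist _ n _
      _ ≤ ∑ i ∈ Finset.range n, 2 * coeqWeight f g (q i) (q (i + 1)) :=
          Finset.sum_le_sum fun i _ => edge_section f g _ _
      _ = 2 * ∑ i ∈ Finset.range n, coeqWeight f g (q i) (q (i + 1)) :=
          (Finset.mul_sum _ _ _).symm
  have hhalf : pathDist (dblWeight f g) (x, false) (x', false) / 2 ≤
      pathDist (coeqWeight f g) x x' := by
    conv_rhs => rw [pathDist]
    refine le_iInf fun n => le_iInf fun q => le_iInf fun h0 => le_iInf fun hn => ?_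
    exact ENNReal.div_le_of_le_mul (by rw [mul_comm]; exact key n q h0 hn)
  calc pathDist (dblWeight f g) (x, false) (x', false)
      = pathDist (dblWeight f g) (x, false) (x', false) / 2 * 2 :=
        (ENNReal.div_mul_cancel two_ne_zero ENNReal.ofNat_ne_top).symm
    _ ≤ pathDist (coeqWeight f g) x x' * 2 := mul_le_mul_left hhalf 2
    _ = 2 * pathDist (coeqWeight f g) x x' := mul_comm _ _

lemma close_section (u : X × Bool) :
    pathDist (dblWeight f g) (u.1, false) u ≤ 1 := by
  obtain ⟨x, b⟩ := u
  cases b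
  · simp [pathDist_self]
  · refine (pathDist_le_weight _ _ _).trans ?_
    rw [dblWeight, if_neg (by simp), if_pos (Or.inl rfl)]

lemma close_section' (u : X × Bool) :
    pathDist (dblWeight f g) u (u.1, false) ≤ 1 := by
  obtain ⟨x, b⟩ := u
  cases b
  · simp [pathDist_self]
  · refine (pathDist_le_weight _ _ _).trans ?_
    rw [dblWeight, if_neg (by simp), if_pos (Or.inl rfl)]

end Glue

/-- The projection `r : D → Coeq(f,g)` is 1-Lipschitz, the section
`s : x ↦ (x, 0)` is 2-Lipschitz, `r ∘ s = id`, `s ∘ r` is 1-close to the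
identity; in particular `r` is a quasi-isometry. -/
theorem doubled_gluing_projection_quasiIsometry {A X : Type*} [EMetricSpace X]
    (f g : A → X) :
    (∀ u v : X × Bool,
      pathDist (coeqWeight f g) u.1 v.1 ≤ pathDist (dblWeight f g) u v) ∧
    (∀ x x' : X,
      pathDist (dblWeight f g) (x, false) (x', false) ≤
        2 * pathDist (coeqWeight f g) x x') ∧
    (∀ x : X, ((x, false) : X × Bool).1 = x) ∧
    (∀ u : X × Bool, pathDist (dblWeight f g) (u.1, false) u ≤ 1) ∧
    QuasiIsometry (pathDist (dblWeight f g)) (pathDist (coeqWeight f g))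
      (Prod.fst : X × Bool → X) := by
  refine ⟨proj_lipschitz f g, section_lipschitz f g, fun x => rfl,
    close_section f g, ⟨1, 0, fun u v => by simpa using proj_lipschitz f g u v⟩,
    ⟨2, 2, fun u v => ?_⟩, ⟨0, fun y => ⟨(y, false), by simp [pathDist_self]⟩⟩⟩
  have h2 : ((2 : ℝ≥0) : ℝ≥0∞) = 2 := by norm_num
  rw [h2]
  calc pathDist (dblWeight f g) u v
      ≤ pathDist (dblWeight f g) u (u.1, false) +
        (pathDist (dblWeight f g) (u.1, false) (v.1, false) +
          pathDist (dblWeight f g) (v.1, false) v) := by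
        refine (pathDist_triangle _ u (u.1, false) v).trans ?_
        exact add_le_add le_rfl (pathDist_triangle _ _ (v.1, false) _)
    _ ≤ 1 + (2 * pathDist (coeqWeight f g) u.1 v.1 + 1) :=
        add_le_add (close_section' f g u)
          (add_le_add (section_lipschitz f g u.1 v.1) (close_section f g v))
    _ = 2 * pathDist (coeqWeight f g) u.1 v.1 + 2 := by ring


end CoarseStmt
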